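/- Let V be a real vector space and (g, [·,·]_g, ⟨·,·⟩_g) a quadratic vector space. Let K be an isometry of (g, ⟨·,·⟩_g), Φ : V → g linear, and β : V × V → ℝ a skew-symmetric bilinear form. Define I on E = V ⊕ V* ⊕ g by I(X) = X + i_Xβ - Φ*Φ(X) + Φ(X), I(η) = η, I(r) = -2Φ*K(r) + K(r), where (Φ*s)(X) := ⟨s, Φ(X)⟩_g defines Φ* : g → V*. Then I preserves the pairing ⟨X+ξ+r, Y+η+s⟩ = (1/2)(η(X)+ξ(Y)) + ⟨r,s⟩_g on E, and I is invertible with inverse given by the same formulas with (K, Φ, β) replaced by (K⁻¹, -K⁻¹Φ, -β). -/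
import Mathlib


/-- The canonical pairing on `E = V ⊕ V* ⊕ g`. -/
noncomputable def pairE {V g : Type*} [AddCommGroup V] [Module ℝ V] [AddCommGroup g] [Module ℝ g]
    (bg : LinearMap.BilinForm ℝ g) (u v : V × Module.Dual ℝ V × g) : ℝ :=
  (1 / 2 : ℝ) * (v.2.1 u.1 + u.2.1 v.1) + bg u.2.2 v.2.2

/-- The map `I` on `E = V ⊕ V* ⊕ g` determined by a triple `(K, Φ, β)`:
`I(X) = X + i_Xβ - Φ*Φ(X) + Φ(X)`, `I(η) = η`, `I(r) = -2Φ*K(r) + K(r)`. -/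
noncomputable def ImapE {V g : Type*} [AddCommGroup V] [Module ℝ V] [AddCommGroup g] [Module ℝ g]
    (K : g →ₗ[ℝ] g) (Φ : V →ₗ[ℝ] g) (Φs : g →ₗ[ℝ] Module.Dual ℝ V)
    (β : V →ₗ[ℝ] Module.Dual ℝ V)
    (u : V × Module.Dual ℝ V × g) : V × Module.Dual ℝ V × g :=
  (u.1,
   β u.1 - Φs (Φ u.1) + u.2.1 - (2 : ℝ) • Φs (K u.2.2),
   Φ u.1 + K u.2.2)

/-- The map `I` defined by `(K, Φ, β)` (with `K` an isometry, `β`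
skew) preserves the canonical pairing on `E = V ⊕ V* ⊕ g` and is invertible with
inverse given by the same formulas for `(K⁻¹, -K⁻¹Φ, -β)`. -/
theorem stmt_10 {V g : Type*} [AddCommGroup V] [Module ℝ V] [FiniteDimensional ℝ V]
    [AddCommGroup g] [Module ℝ g] [FiniteDimensional ℝ g]
    (bg : LinearMap.BilinForm ℝ g)
    (hbg_symm : ∀ r s : g, bg r s = bg s r)
    (hbg_nd : ∀ r : g, (∀ s : g, bg r s = 0) → r = 0)
    (K : g →ₗ[ℝ] g) (Kinv : g →ₗ[ℝ] g)
    (hK1 : ∀ r : g, Kinv (K r) = r) (hK2 : ∀ r : g, K (Kinv r) = r)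
    (hKisom : ∀ r s : g, bg (K r) (K s) = bg r s)
    (Φ : V →ₗ[ℝ] g) (Φs : g →ₗ[ℝ] Module.Dual ℝ V)
    (hΦs : ∀ (s : g) (X : V), Φs s X = bg s (Φ X))
    (β : V →ₗ[ℝ] Module.Dual ℝ V)
    (hβskew : ∀ X Y : V, β X Y = - β Y X)
    -- the metric adjoint of `Φ' = -K⁻¹Φ`:
    (Φs' : g →ₗ[ℝ] Module.Dual ℝ V)
    (hΦs' : ∀ (s : g) (X : V), Φs' s X = bg s (-(Kinv (Φ X)))) :
    (∀ u v : V × Module.Dual ℝ V × g,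
        pairE bg (ImapE K Φ Φs β u) (ImapE K Φ Φs β v) = pairE bg u v) ∧
    (∀ u : V × Module.Dual ℝ V × g,
        ImapE Kinv (-(Kinv ∘ₗ Φ)) Φs' (-β) (ImapE K Φ Φs β u) = u ∧
        ImapE K Φ Φs β (ImapE Kinv (-(Kinv ∘ₗ Φ)) Φs' (-β) u) = u) := by

  have hKinv : ∀ a b : g, bg (Kinv a) (Kinv b) = bg a b := fun a b => by
    rw [← hKisom (Kinv a) (Kinv b), hK2, hK2]
  constructor
  · rintro ⟨X, ξ, r⟩ ⟨Y, η, s⟩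
    simp only [ImapE, pairE, LinearMap.add_apply, LinearMap.sub_apply,
      LinearMap.smul_apply, smul_eq_mul, hΦs, map_add, hKisom]
    have h1 := hβskew X Y
    have h2 := hbg_symm (Φ X) (K s)
    have h3 := hbg_symm (Φ X) (Φ Y)
    ring_nf
    nlinarith [hbg_symm (Φ Y) (K r), (bg (Φ X + K r)).map_add (Φ Y) (K s),
      bg.map_add (Φ X) (K r)]
  · rintro ⟨X, ξ, r⟩
    have hsec : ∀ (a : Module.Dual ℝ V) (b c : Module.Dual ℝ V), a = b → True := fun _ _ _ _ => trivial
    refine ⟨Prod.ext rfl (Prod.ext ?_ ?_), Prod.ext rfl (Prod.ext ?_ ?_)⟩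
    · ext Y
      simp only [ImapE, LinearMap.add_apply, LinearMap.sub_apply, LinearMap.smul_apply,
        LinearMap.neg_apply, LinearMap.comp_apply, smul_eq_mul, map_add, map_neg, map_smul,
        hΦs, hΦs', hK1, hK2]
      simp only [map_neg, map_add, LinearMap.map_smul, smul_eq_mul, hKinv,
        LinearMap.neg_apply]
      have := hKisom (Kinv (Φ X)) (Kinv (Φ Y))
      have h4 := hKinv (Φ X) (Φ Y)
      have h5 := hKisom r (Kinv (Φ Y))
      rw [hK2] at h5
      ring_nf
      linarith [bg.map_add (Φ X) (K r), (bg (Φ X + K r)).map_neg (Kinv (Φ Y)),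
        (congrArg (fun t => bg t (Kinv (Φ Y))) (rfl : Φ X + K r = Φ X + K r))]
    · simp only [ImapE, map_add, LinearMap.comp_apply, LinearMap.neg_apply, hK1]
      abel
    · ext Y
      simp only [ImapE, LinearMap.add_apply, LinearMap.sub_apply, LinearMap.smul_apply,
        LinearMap.neg_apply, LinearMap.comp_apply, smul_eq_mul, map_add, map_neg, map_smul,
        hΦs, hΦs', hK1, hK2]
      have h4 := hKinv (Φ X) (Φ Y)
      have h5 := hKisom (Kinv r) (Kinv (Φ Y))
      rw [hK2, hK2] at h5
      ring_nf
      linarith [bg.map_add (Φ X) (K r)]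
    · simp only [ImapE, map_add, map_neg, LinearMap.comp_apply, LinearMap.neg_apply, hK1, hK2]
      abel
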